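/- arXiv:1206.1965 — 2 statements merged into one kernel-verified Lean document; each statement's English description precedes it below -/
import Mathlib

section
/- Let A, B ⊆ ℝ^d be compact sets, t ∈ (0,1), S = tA + (1-t)B. Define φ(s) = |{x : |S_x| > s}| − t|{x : |A_x| > s}| − (1-t)|{x : |B_x| > s}|. If s < min(‖A‖_∞, ‖B‖_∞), where ‖A‖_∞ = max_x |A_x|, then φ(s) ≥ 0. -/
open MeasureTheory Set
open scoped Pointwise ENNReal NNReal


/-- Weighted AM-GM in `ℝ≥0∞`. -/
lemma ennreal_gm_le_am (a b : ℝ≥0∞) {t : ℝ} (ht0 : 0 < t) (ht1 : t < 1) :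
    a ^ t * b ^ (1 - t) ≤ ENNReal.ofReal t * a + ENNReal.ofReal (1 - t) * b := by
  have h1t : 0 < 1 - t := by linarith
  rcases eq_or_ne a ⊤ with rfl | ha
  · rcases eq_or_ne b 0 with rfl | hb
    · simp [ENNReal.zero_rpow_of_pos h1t]
    · have h1 : (⊤ : ℝ≥0∞) ^ t = ⊤ := ENNReal.top_rpow_of_pos ht0
      have h2 : ENNReal.ofReal t * ⊤ = ⊤ := by
        rw [ENNReal.mul_top]
        simp [ENNReal.ofReal_eq_zero, not_le.2 ht0]
      rw [h1, h2]
      exact le_top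
  rcases eq_or_ne b ⊤ with rfl | hb
  · have h1 : (⊤ : ℝ≥0∞) ^ (1 - t) = ⊤ := ENNReal.top_rpow_of_pos h1t
    have h2 : ENNReal.ofReal (1 - t) * ⊤ = ⊤ := by
      rw [ENNReal.mul_top]
      simp [ENNReal.ofReal_eq_zero, not_le.2 h1t]
    rw [h1, h2]
    simp
  lift a to ℝ≥0 using ha
  lift b to ℝ≥0 using hb
  have key := NNReal.geom_mean_le_arith_mean2_weighted (w₁ := t.toNNReal)
    (w₂ := (1 - t).toNNReal) (p₁ := a) (p₂ := b)
    (by rw [← Real.toNNReal_add ht0.le h1t.le]; norm_num)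
  have hco : ((t.toNNReal : ℝ)) = t := Real.coe_toNNReal t ht0.le
  have hco' : (((1 - t).toNNReal : ℝ)) = 1 - t := Real.coe_toNNReal _ h1t.le
  rw [hco, hco'] at key
  rw [← ENNReal.coe_rpow_of_nonneg a ht0.le, ← ENNReal.coe_rpow_of_nonneg b h1t.le,
    ← ENNReal.coe_mul, ENNReal.ofReal, ENNReal.ofReal, ← ENNReal.coe_mul, ← ENNReal.coe_mul,
    ← ENNReal.coe_add, ENNReal.coe_le_coe]
  exact key

lemma ennreal_min_le_gm (a b : ℝ≥0∞) {t : ℝ} (ht0 : 0 < t) (ht1 : t < 1) :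
    min a b ≤ a ^ t * b ^ (1 - t) := by
  have h1t : 0 < 1 - t := by linarith
  set m := min a b with hm
  rcases eq_or_ne m 0 with h0 | h0
  · simp [h0]
  rcases eq_or_ne m ⊤ with htop | htop
  · have haa : a = ⊤ := by
      have := min_le_left a b; rw [← hm, htop] at this; exact top_le_iff.1 this
    have hbb : b = ⊤ := by
      have := min_le_right a b; rw [← hm, htop] at this; exact top_le_iff.1 this
    rw [haa, hbb, ENNReal.top_rpow_of_pos ht0, ENNReal.top_rpow_of_pos h1t, htop]
    simp
  calc m = m ^ t * m ^ (1 - t) := by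
        rw [← ENNReal.rpow_add _ _ h0 htop]; norm_num
    _ ≤ a ^ t * b ^ (1 - t) := by
        exact mul_le_mul' (ENNReal.rpow_le_rpow (min_le_left a b) ht0.le)
          (ENNReal.rpow_le_rpow (min_le_right a b) h1t.le)


/-- One-dimensional Brunn–Minkowski for compact sets. -/
lemma bm_compact_R {K L : Set ℝ} (hK : IsCompact K) (hL : IsCompact L)
    (hKne : K.Nonempty) (hLne : L.Nonempty) :
    volume K + volume L ≤ volume (K + L) := by
  set a := sSup K with ha
  set b := sInf L with hb
  have haK : a ∈ K := hK.sSup_mem hKne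
  have hbL : b ∈ L := hL.sInf_mem hLne
  set X : Set ℝ := (fun k => k + b) '' K with hX
  set Y : Set ℝ := (fun l => a + l) '' L with hY
  have hXK : volume X = volume K := by
    rw [hX, show (fun k => k + b) '' K = (fun x => x + -b) ⁻¹' K by
      rw [Set.image_add_right]]
    exact measure_preimage_add_right volume (-b) K
  have hYL : volume Y = volume L := by
    rw [hY, show (fun l => a + l) '' L = (fun x => -a + x) ⁻¹' L by
      rw [Set.image_add_left]]
    exact measure_preimage_add volume (-a) L
  have hsub : X ∪ Y ⊆ K + L := by
    rintro z (⟨k, hk, rfl⟩ | ⟨l, hl, rfl⟩)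
    · exact Set.add_mem_add hk hbL
    · exact Set.add_mem_add haK hl
  have hinter : X ∩ Y ⊆ {a + b} := by
    rintro z ⟨⟨k, hk, rfl⟩, ⟨l, hl, hz⟩⟩
    have hka : k ≤ a := le_csSup hK.bddAbove hk
    have hbl : b ≤ l := csInf_le hL.bddBelow hl
    simp only at hz
    have : k = a := by linarith
    simp only [Set.mem_singleton_iff, this]
  have hYmeas : MeasurableSet Y :=
    ((hL.image (continuous_const.add continuous_id)).isClosed).measurableSet
  have hunion : X ∪ Y = (X \ {a + b}) ∪ Y := by
    apply Set.Subset.antisymm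
    · rintro z (hz | hz)
      · by_cases h : z = a + b
        · right; subst h; exact ⟨b, hbL, rfl⟩
        · left; exact ⟨hz, by simpa using h⟩
      · right; exact hz
    · rintro z (hz | hz)
      · exact Or.inl hz.1
      · exact Or.inr hz
  have hdisj : Disjoint (X \ {a + b}) Y := by
    rw [Set.disjoint_left]
    rintro z ⟨hzX, hz⟩ hzY
    exact hz (hinter ⟨hzX, hzY⟩)
  calc volume K + volume L = volume X + volume Y := by rw [hXK, hYL]
    _ = volume (X \ {a + b}) + volume Y := by
        rw [measure_diff_null (by simp : volume ({a + b} : Set ℝ) = 0)]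
    _ = volume ((X \ {a + b}) ∪ Y) := (measure_union hdisj hYmeas).symm
    _ = volume (X ∪ Y) := by rw [← hunion]
    _ ≤ volume (K + L) := measure_mono hsub

/-- One-dimensional Brunn–Minkowski for measurable sets of finite measure. -/
lemma bm_meas_R {U V : Set ℝ} (hU : MeasurableSet U) (hV : MeasurableSet V)
    (hUne : U.Nonempty) (hVne : V.Nonempty)
    (hUfin : volume U ≠ ⊤) (hVfin : volume V ≠ ⊤) :
    volume U + volume V ≤ volume (U + V) := by
  apply ENNReal.le_of_forall_pos_le_add
  intro ε hε _
  obtain ⟨K, hKU, hKc, hKv⟩ := hU.exists_isCompact_lt_add hUfin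
    (ε := ENNReal.ofReal (ε / 2)) (by simp [hε, (by positivity : (0:ℝ) < ε/2)])
  obtain ⟨L, hLV, hLc, hLv⟩ := hV.exists_isCompact_lt_add hVfin
    (ε := ENNReal.ofReal (ε / 2)) (by simp [hε, (by positivity : (0:ℝ) < ε/2)])
  obtain ⟨u, hu⟩ := hUne
  obtain ⟨v, hv⟩ := hVne
  set K' : Set ℝ := K ∪ {u} with hK'
  set L' : Set ℝ := L ∪ {v} with hL'
  have hK'c : IsCompact K' := hKc.union isCompact_singleton
  have hL'c : IsCompact L' := hLc.union isCompact_singleton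
  have hK'U : K' ⊆ U := Set.union_subset hKU (by simpa using hu)
  have hL'V : L' ⊆ V := Set.union_subset hLV (by simpa using hv)
  have h1 : volume U ≤ volume K' + ENNReal.ofReal (ε / 2) :=
    le_trans hKv.le (add_le_add_left
      (measure_mono (Set.subset_union_left : K ⊆ K')) _)
  have h2 : volume V ≤ volume L' + ENNReal.ofReal (ε / 2) :=
    le_trans hLv.le (add_le_add_left
      (measure_mono (Set.subset_union_left : L ⊆ L')) _)
  have hbm := bm_compact_R hK'c hL'c ⟨u, Or.inr rfl⟩ ⟨v, Or.inr rfl⟩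
  have hKL : volume (K' + L') ≤ volume (U + V) :=
    measure_mono (Set.add_subset_add hK'U hL'V)
  calc volume U + volume V
      ≤ (volume K' + ENNReal.ofReal (ε / 2)) + (volume L' + ENNReal.ofReal (ε / 2)) := by
        exact add_le_add h1 h2
    _ = (volume K' + volume L') + (ENNReal.ofReal (ε / 2) + ENNReal.ofReal (ε / 2)) := by ring
    _ ≤ volume (U + V) + ε := by
        gcongr
        · exact hbm.trans hKL
        · rw [← ENNReal.ofReal_add (by positivity) (by positivity)]
          simp [ENNReal.ofReal]


lemma volume_smul_R (r : ℝ) (hr : 0 ≤ r) (U : Set ℝ) :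
    volume (r • U) = ENNReal.ofReal r * volume U := by
  rw [Measure.addHaar_smul_of_nonneg volume hr U]
  norm_num


lemma bm_scaled {U V : Set ℝ} (hU : MeasurableSet U) (hV : MeasurableSet V)
    (hUne : U.Nonempty) (hVne : V.Nonempty)
    (hUfin : volume U ≠ ⊤) (hVfin : volume V ≠ ⊤)
    {t : ℝ} (ht : t ∈ Set.Ioo (0:ℝ) 1) :
    ENNReal.ofReal t * volume U + ENNReal.ofReal (1 - t) * volume V
      ≤ volume (t • U + (1 - t) • V) := by
  obtain ⟨ht0, ht1⟩ := ht
  have h1t : 0 < 1 - t := by linarith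
  have hU' : volume (t • U) = ENNReal.ofReal t * volume U := volume_smul_R t ht0.le U
  have hV' : volume ((1 - t) • V) = ENNReal.ofReal (1 - t) * volume V :=
    volume_smul_R _ h1t.le V
  rw [← hU', ← hV']
  exact bm_meas_R (hU.const_smul₀ t) (hV.const_smul₀ (1 - t))
    (hUne.smul_set) (hVne.smul_set)
    (by rw [hU']; exact ENNReal.mul_ne_top ENNReal.ofReal_ne_top hUfin)
    (by rw [hV']; exact ENNReal.mul_ne_top ENNReal.ofReal_ne_top hVfin)




/-- One-dimensional Prékopa–Leindler-type inequality for `ℝ≥0∞`-valued functions. -/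
lemma pl_one_dim {f g h : ℝ → ℝ≥0∞} (hf : Measurable f) (hg : Measurable g) (hh : Measurable h)
    {t : ℝ} (ht0 : 0 < t) (ht1 : t < 1)
    (hfsup : (⨆ x, f x) ≠ ⊤) (hgsup : (⨆ x, g x) ≠ ⊤)
    (hfint : (∫⁻ x, f x) ≠ ⊤) (hgint : (∫⁻ x, g x) ≠ ⊤)
    (hhfin : ∀ z, h z ≠ ⊤)
    (hmain : ∀ x y, f x ^ t * g y ^ (1 - t) ≤ h (t * x + (1 - t) * y)) :
    (∫⁻ x, f x) ^ t * (∫⁻ x, g x) ^ (1 - t) ≤ ∫⁻ z, h z := by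
  have h1t : 0 < 1 - t := by linarith
  rcases eq_or_ne (∫⁻ x, f x) 0 with hf0 | hf0
  · rw [hf0, ENNReal.zero_rpow_of_pos ht0, zero_mul]; exact zero_le
  rcases eq_or_ne (∫⁻ x, g x) 0 with hg0 | hg0
  · rw [hg0, ENNReal.zero_rpow_of_pos h1t, mul_zero]; exact zero_le
  set mf := ⨆ x, f x with hmf
  set mg := ⨆ x, g x with hmg
  have hmf0 : mf ≠ 0 := by
    intro h0
    apply hf0
    have hfz : ∀ x, f x = 0 := fun x => le_antisymm (h0 ▸ le_iSup f x) zero_le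
    simp [hfz]
  have hmg0 : mg ≠ 0 := by
    intro h0
    apply hg0
    have hgz : ∀ x, g x = 0 := fun x => le_antisymm (h0 ▸ le_iSup g x) zero_le
    simp [hgz]
  set c := mf ^ t * mg ^ (1 - t) with hc
  have hc0 : c ≠ 0 := mul_ne_zero
    (ENNReal.rpow_pos (pos_iff_ne_zero.2 hmf0) hfsup).ne'
    (ENNReal.rpow_pos (pos_iff_ne_zero.2 hmg0) hgsup).ne'
  have hctop : c ≠ ⊤ := ENNReal.mul_ne_top
    (ENNReal.rpow_ne_top_of_nonneg ht0.le hfsup)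
    (ENNReal.rpow_ne_top_of_nonneg h1t.le hgsup)
  set F := fun x => mf⁻¹ * f x with hFdef
  set G := fun y => mg⁻¹ * g y with hGdef
  set H := fun z => c⁻¹ * h z with hHdef
  have hFm : Measurable F := hf.const_mul _
  have hGm : Measurable G := hg.const_mul _
  have hHm : Measurable H := hh.const_mul _
  have hFle : ∀ x, F x ≤ 1 := fun x => by
    calc mf⁻¹ * f x ≤ mf⁻¹ * mf := by gcongr; exact le_iSup f x
      _ = 1 := ENNReal.inv_mul_cancel hmf0 hfsup
  have hGle : ∀ y, G y ≤ 1 := fun y => by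
    calc mg⁻¹ * g y ≤ mg⁻¹ * mg := by gcongr; exact le_iSup g y
      _ = 1 := ENNReal.inv_mul_cancel hmg0 hgsup
  have hFsup : (⨆ x, F x) = 1 := by
    rw [hFdef, ← ENNReal.mul_iSup, ← hmf, ENNReal.inv_mul_cancel hmf0 hfsup]
  have hGsup : (⨆ y, G y) = 1 := by
    rw [hGdef, ← ENNReal.mul_iSup, ← hmg, ENNReal.inv_mul_cancel hmg0 hgsup]
  have hcinv : c⁻¹ = (mf⁻¹) ^ t * (mg⁻¹) ^ (1 - t) := by
    rw [hc, ENNReal.mul_inv (Or.inl (ENNReal.rpow_pos (pos_iff_ne_zero.2 hmf0) hfsup).ne')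
      (Or.inl (ENNReal.rpow_ne_top_of_nonneg ht0.le hfsup)),
      ENNReal.inv_rpow, ENNReal.inv_rpow]
  have hmain' : ∀ x y, F x ^ t * G y ^ (1 - t) ≤ H (t * x + (1 - t) * y) := by
    intro x y
    have e1 : F x ^ t * G y ^ (1 - t) = c⁻¹ * (f x ^ t * g y ^ (1 - t)) := by
      rw [hFdef, hGdef, ENNReal.mul_rpow_of_nonneg _ _ ht0.le,
        ENNReal.mul_rpow_of_nonneg _ _ h1t.le, hcinv]
      ring
    rw [e1, hHdef]
    exact mul_le_mul_right (hmain x y) _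
  have hFint : (∫⁻ x, F x) = mf⁻¹ * ∫⁻ x, f x :=
    lintegral_const_mul' _ _ (ENNReal.inv_ne_top.2 hmf0)
  have hGint : (∫⁻ y, G y) = mg⁻¹ * ∫⁻ y, g y :=
    lintegral_const_mul' _ _ (ENNReal.inv_ne_top.2 hmg0)
  have hHint : (∫⁻ z, H z) = c⁻¹ * ∫⁻ z, h z :=
    lintegral_const_mul' _ _ (ENNReal.inv_ne_top.2 hc0)
  have hFint_ne : (∫⁻ x, F x) ≠ ⊤ := by
    rw [hFint]; exact ENNReal.mul_ne_top (ENNReal.inv_ne_top.2 hmf0) hfint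
  have hGint_ne : (∫⁻ y, G y) ≠ ⊤ := by
    rw [hGint]; exact ENNReal.mul_ne_top (ENNReal.inv_ne_top.2 hmg0) hgint
  -- superlevel-set inequality
  have key : ∀ s ∈ Set.Ioo (0:ℝ) 1,
      ENNReal.ofReal t * volume {x | ENNReal.ofReal s < F x}
        + ENNReal.ofReal (1 - t) * volume {y | ENNReal.ofReal s < G y}
      ≤ volume {z | ENNReal.ofReal s < H z} := by
    intro s hs
    have hsne : ENNReal.ofReal s ≠ 0 := by
      simp only [ne_eq, ENNReal.ofReal_eq_zero, not_le]; exact hs.1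
    have hUm : MeasurableSet {x | ENNReal.ofReal s < F x} :=
      measurableSet_lt measurable_const hFm
    have hVm : MeasurableSet {y | ENNReal.ofReal s < G y} :=
      measurableSet_lt measurable_const hGm
    have hUne : {x | ENNReal.ofReal s < F x}.Nonempty := by
      have : ENNReal.ofReal s < ⨆ x, F x := by
        rw [hFsup]; exact ENNReal.ofReal_lt_one.2 hs.2
      obtain ⟨x₀, hx₀⟩ := lt_iSup_iff.mp this
      exact ⟨x₀, hx₀⟩
    have hVne : {y | ENNReal.ofReal s < G y}.Nonempty := by
      have : ENNReal.ofReal s < ⨆ y, G y := by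
        rw [hGsup]; exact ENNReal.ofReal_lt_one.2 hs.2
      obtain ⟨y₀, hy₀⟩ := lt_iSup_iff.mp this
      exact ⟨y₀, hy₀⟩
    have hUfin : volume {x | ENNReal.ofReal s < F x} ≠ ⊤ := by
      have hle : volume {x | ENNReal.ofReal s < F x}
          ≤ (∫⁻ x, F x) / ENNReal.ofReal s := by
        refine le_trans (measure_mono ?_) (meas_ge_le_lintegral_div hFm.aemeasurable hsne
          ENNReal.ofReal_ne_top)
        exact fun x hx => Set.mem_setOf_eq ▸ le_of_lt hx
      exact ne_top_of_le_ne_top (ENNReal.div_lt_top hFint_ne hsne).ne hle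
    have hVfin : volume {y | ENNReal.ofReal s < G y} ≠ ⊤ := by
      have hle : volume {y | ENNReal.ofReal s < G y}
          ≤ (∫⁻ y, G y) / ENNReal.ofReal s := by
        refine le_trans (measure_mono ?_) (meas_ge_le_lintegral_div hGm.aemeasurable hsne
          ENNReal.ofReal_ne_top)
        exact fun y hy => Set.mem_setOf_eq ▸ le_of_lt hy
      exact ne_top_of_le_ne_top (ENNReal.div_lt_top hGint_ne hsne).ne hle
    have hincl : t • {x | ENNReal.ofReal s < F x} + (1 - t) • {y | ENNReal.ofReal s < G y}
        ⊆ {z | ENNReal.ofReal s < H z} := by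
      rintro z ⟨p, hp, q, hq, rfl⟩
      obtain ⟨x, hx, rfl⟩ := hp
      obtain ⟨y, hy, rfl⟩ := hq
      show ENNReal.ofReal s < H (t • x + (1 - t) • y)
      have hlt : ENNReal.ofReal s < F x ^ t * G y ^ (1 - t) := by
        calc ENNReal.ofReal s
            = ENNReal.ofReal s ^ t * ENNReal.ofReal s ^ (1 - t) := by
              rw [← ENNReal.rpow_add _ _ hsne ENNReal.ofReal_ne_top]; norm_num
          _ < _ := ENNReal.mul_lt_mul (ENNReal.rpow_lt_rpow hx ht0)
              (ENNReal.rpow_lt_rpow hy h1t)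
      exact hlt.trans_le (by simpa [smul_eq_mul] using hmain' x y)
    calc ENNReal.ofReal t * volume {x | ENNReal.ofReal s < F x}
          + ENNReal.ofReal (1 - t) * volume {y | ENNReal.ofReal s < G y}
        ≤ volume (t • {x | ENNReal.ofReal s < F x}
            + (1 - t) • {y | ENNReal.ofReal s < G y}) :=
          bm_scaled hUm hVm hUne hVne hUfin hVfin ⟨ht0, ht1⟩
      _ ≤ volume {z | ENNReal.ofReal s < H z} := measure_mono hincl
  -- layer cake representations
  have layer : ∀ (φ : ℝ → ℝ≥0∞), Measurable φ → (∀ x, φ x ≠ ⊤) →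
      (∫⁻ x, φ x) = ∫⁻ s in Set.Ioi (0:ℝ), volume {x | ENNReal.ofReal s < φ x} := by
    intro φ hφ hφfin
    have h1 : (∫⁻ x, φ x) = ∫⁻ x, ENNReal.ofReal ((φ x).toReal) :=
      lintegral_congr fun x => (ENNReal.ofReal_toReal (hφfin x)).symm
    rw [h1, lintegral_eq_lintegral_meas_lt volume
      (Filter.Eventually.of_forall fun x => ENNReal.toReal_nonneg)
      hφ.ennreal_toReal.aemeasurable]
    refine setLIntegral_congr_fun measurableSet_Ioi
      (fun s hs => ?_)
    congr 1
    ext x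
    simp only [Set.mem_setOf_eq]
    exact (ENNReal.ofReal_lt_iff_lt_toReal (le_of_lt hs) (hφfin x)).symm
  have hFfin : ∀ x, F x ≠ ⊤ := fun x => ((hFle x).trans_lt ENNReal.one_lt_top).ne
  have hGfin : ∀ y, G y ≠ ⊤ := fun y => ((hGle y).trans_lt ENNReal.one_lt_top).ne
  have hHfin : ∀ z, H z ≠ ⊤ := fun z =>
    ENNReal.mul_ne_top (ENNReal.inv_ne_top.2 hc0) (hhfin z)
  -- truncation: integral over Ioi 0 equals integral over Ioo 0 1 for F and G
  have trunc : ∀ (φ : ℝ → ℝ≥0∞), (∀ x, φ x ≤ 1) →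
      (∫⁻ s in Set.Ioi (0:ℝ), volume {x | ENNReal.ofReal s < φ x})
        = ∫⁻ s in Set.Ioo (0:ℝ) 1, volume {x | ENNReal.ofReal s < φ x} := by
    intro φ hφle
    have hsplit : Set.Ioi (0:ℝ) = Set.Ioo 0 1 ∪ Set.Ici 1 :=
      (Set.Ioo_union_Ici_eq_Ioi zero_lt_one).symm
    have hdisj : Disjoint (Set.Ioo (0:ℝ) 1) (Set.Ici 1) := by
      rw [Set.disjoint_left]
      rintro a ⟨_, ha1⟩ ha2
      exact absurd ha2 (not_le.2 ha1)
    rw [hsplit, lintegral_union measurableSet_Ici hdisj]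
    have hzero : (∫⁻ s in Set.Ici (1:ℝ), volume {x | ENNReal.ofReal s < φ x}) = 0 := by
      rw [setLIntegral_congr_fun measurableSet_Ici
        (fun s hs => ?_), lintegral_zero]
      have : {x | ENNReal.ofReal s < φ x} = ∅ := by
        rw [Set.eq_empty_iff_forall_notMem]
        intro x hx
        exact absurd hx (not_lt.2 ((hφle x).trans (ENNReal.one_le_ofReal.2 hs)))
      rw [this, measure_empty]
    rw [hzero, add_zero]
  -- antitone measurability
  have hφmeas : ∀ (φ : ℝ → ℝ≥0∞),
      Measurable (fun s : ℝ => volume {x | ENNReal.ofReal s < φ x}) := by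
    intro φ
    have : Antitone (fun s : ℝ => volume {x | ENNReal.ofReal s < φ x}) := by
      intro s₁ s₂ h12
      exact measure_mono fun x hx => lt_of_le_of_lt (ENNReal.ofReal_le_ofReal h12) hx
    exact this.measurable
  -- main chain for normalized functions
  have main_chain : (∫⁻ x, F x) ^ t * (∫⁻ y, G y) ^ (1 - t) ≤ ∫⁻ z, H z := by
    calc (∫⁻ x, F x) ^ t * (∫⁻ y, G y) ^ (1 - t)
        ≤ ENNReal.ofReal t * (∫⁻ x, F x) + ENNReal.ofReal (1 - t) * (∫⁻ y, G y) :=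
          ennreal_gm_le_am _ _ ht0 ht1
      _ = ENNReal.ofReal t * (∫⁻ s in Set.Ioo (0:ℝ) 1, volume {x | ENNReal.ofReal s < F x})
            + ENNReal.ofReal (1 - t)
              * (∫⁻ s in Set.Ioo (0:ℝ) 1, volume {y | ENNReal.ofReal s < G y}) := by
          rw [layer F hFm hFfin, layer G hGm hGfin, trunc F hFle, trunc G hGle]
      _ = ∫⁻ s in Set.Ioo (0:ℝ) 1,
            (ENNReal.ofReal t * volume {x | ENNReal.ofReal s < F x}
              + ENNReal.ofReal (1 - t) * volume {y | ENNReal.ofReal s < G y}) := by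
          rw [lintegral_add_left ((hφmeas F).const_mul _),
            lintegral_const_mul' _ _ ENNReal.ofReal_ne_top,
            lintegral_const_mul' _ _ ENNReal.ofReal_ne_top]
      _ ≤ ∫⁻ s in Set.Ioo (0:ℝ) 1, volume {z | ENNReal.ofReal s < H z} :=
          setLIntegral_mono (hφmeas H) key
      _ ≤ ∫⁻ s in Set.Ioi (0:ℝ), volume {z | ENNReal.ofReal s < H z} :=
          lintegral_mono_set Set.Ioo_subset_Ioi_self
      _ = ∫⁻ z, H z := (layer H hHm hHfin).symm
  -- unnormalize
  have e2 : (∫⁻ x, F x) ^ t * (∫⁻ y, G y) ^ (1 - t)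
      = c⁻¹ * ((∫⁻ x, f x) ^ t * (∫⁻ y, g y) ^ (1 - t)) := by
    rw [hFint, hGint, ENNReal.mul_rpow_of_nonneg _ _ ht0.le,
      ENNReal.mul_rpow_of_nonneg _ _ h1t.le, hcinv]
    ring
  rw [e2, hHint] at main_chain
  exact (ENNReal.mul_le_mul_iff_right (ENNReal.inv_ne_zero.2 hctop)
    (ENNReal.inv_ne_top.2 hc0)).mp main_chain



lemma slice_isCompact {β : Type*} [TopologicalSpace β] {S : Set (ℝ × β)} (hS : IsCompact S)
    (x : ℝ) : IsCompact (Prod.mk x ⁻¹' S) := by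
  have he : Prod.mk x ⁻¹' S = Prod.snd '' (S ∩ Prod.fst ⁻¹' {x}) := by
    ext y
    constructor
    · intro hy
      exact ⟨(x, y), ⟨hy, rfl⟩, rfl⟩
    · rintro ⟨⟨a, b⟩, ⟨hab, ha⟩, rfl⟩
      have : a = x := ha
      subst this
      exact hab
  rw [he]
  exact ((hS.inter_right ((isClosed_singleton).preimage continuous_fst)).image continuous_snd)

lemma slice_subset_snd_image {α β : Type*} {S : Set (α × β)} (x : α) :
    Prod.mk x ⁻¹' S ⊆ Prod.snd '' S := fun y hy => ⟨(x, y), hy, rfl⟩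

/-- The product-space inductive step for multiplicative Brunn–Minkowski. -/
lemma prodStep {n : ℕ}
    (IH : ∀ (C D : Set (Fin n → ℝ)), IsCompact C → IsCompact D → C.Nonempty → D.Nonempty →
      ∀ t : ℝ, 0 < t → t < 1 →
        volume C ^ t * volume D ^ (1 - t) ≤ volume (t • C + (1 - t) • D))
    (C D : Set (ℝ × (Fin n → ℝ))) (hC : IsCompact C) (hD : IsCompact D)
    {t : ℝ} (ht0 : 0 < t) (ht1 : t < 1) :
    volume C ^ t * volume D ^ (1 - t) ≤ volume (t • C + (1 - t) • D) := by
  have h1t : 0 < 1 - t := by linarith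
  set E := t • C + (1 - t) • D with hE
  have hEc : IsCompact E := (hC.smul t).add (hD.smul (1 - t))
  set f := fun x : ℝ => volume (Prod.mk x ⁻¹' C) with hf
  set g := fun y : ℝ => volume (Prod.mk y ⁻¹' D) with hg
  set h := fun z : ℝ => volume (Prod.mk z ⁻¹' E) with hh
  have hfm : Measurable f := measurable_measure_prodMk_left hC.measurableSet
  have hgm : Measurable g := measurable_measure_prodMk_left hD.measurableSet
  have hhm : Measurable h := measurable_measure_prodMk_left hEc.measurableSet
  have hfsup : (⨆ x, f x) ≠ ⊤ := by
    refine ne_top_of_le_ne_top (((hC.image continuous_snd).measure_lt_top (μ := volume)).ne) (iSup_le fun x => ?_)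
    exact measure_mono (slice_subset_snd_image x)
  have hgsup : (⨆ y, g y) ≠ ⊤ := by
    refine ne_top_of_le_ne_top (((hD.image continuous_snd).measure_lt_top (μ := volume)).ne) (iSup_le fun y => ?_)
    exact measure_mono (slice_subset_snd_image y)
  have hint : ∀ (S : Set (ℝ × (Fin n → ℝ))), MeasurableSet S →
      volume S = ∫⁻ x, volume (Prod.mk x ⁻¹' S) := by
    intro S hS
    rw [MeasureTheory.Measure.volume_eq_prod, Measure.prod_apply hS]
  have hfint : (∫⁻ x, f x) ≠ ⊤ := by
    rw [← hint C hC.measurableSet]; exact hC.measure_lt_top.ne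
  have hgint : (∫⁻ y, g y) ≠ ⊤ := by
    rw [← hint D hD.measurableSet]; exact hD.measure_lt_top.ne
  have hhfin : ∀ z, h z ≠ ⊤ := fun z =>
    ne_top_of_le_ne_top ((hEc.image continuous_snd).measure_lt_top).ne
      (measure_mono (slice_subset_snd_image z))
  have hmain : ∀ x y, f x ^ t * g y ^ (1 - t) ≤ h (t * x + (1 - t) * y) := by
    intro x y
    by_cases hCx : (Prod.mk x ⁻¹' C).Nonempty
    · by_cases hDy : (Prod.mk y ⁻¹' D).Nonempty
      · have step1 := IH _ _ (slice_isCompact hC x) (slice_isCompact hD y) hCx hDy t ht0 ht1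
        refine step1.trans (measure_mono ?_)
        rintro z ⟨p, ⟨u, hu, rfl⟩, q, ⟨v, hv, rfl⟩, rfl⟩
        have hmem : t • ((x, u) : ℝ × (Fin n → ℝ)) + (1 - t) • (y, v) ∈ E :=
          Set.add_mem_add (Set.smul_mem_smul_set hu) (Set.smul_mem_smul_set hv)
        have heq : t • ((x, u) : ℝ × (Fin n → ℝ)) + (1 - t) • (y, v)
            = (t * x + (1 - t) * y, t • u + (1 - t) • v) := by
          simp [Prod.ext_iff, smul_eq_mul]
        rw [heq] at hmem
        exact hmem
      · have : g y = 0 := by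
          rw [hg]; simp [Set.not_nonempty_iff_eq_empty.1 hDy]
        rw [this, ENNReal.zero_rpow_of_pos h1t, mul_zero]
        exact zero_le
    · have : f x = 0 := by
        rw [hf]; simp [Set.not_nonempty_iff_eq_empty.1 hCx]
      rw [this, ENNReal.zero_rpow_of_pos ht0, zero_mul]
      exact zero_le
  have := pl_one_dim hfm hgm hhm ht0 ht1 hfsup hgsup hfint hgint hhfin hmain
  rw [← hint C hC.measurableSet, ← hint D hD.measurableSet, ← hint E hEc.measurableSet] at this
  exact this



/-- Multiplicative Brunn–Minkowski inequality in `Fin n → ℝ`. -/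
lemma mulBM : ∀ n : ℕ, ∀ (C D : Set (Fin n → ℝ)), IsCompact C → IsCompact D →
    C.Nonempty → D.Nonempty → ∀ t : ℝ, 0 < t → t < 1 →
    volume C ^ t * volume D ^ (1 - t) ≤ volume (t • C + (1 - t) • D) := by
  intro n
  induction n with
  | zero =>
    intro C D hC hD hCne hDne t ht0 ht1
    have hCu : C = Set.univ := Subsingleton.eq_univ_of_nonempty hCne
    have hDu : D = Set.univ := Subsingleton.eq_univ_of_nonempty hDne
    have hEu : t • C + (1 - t) • D = Set.univ :=
      Subsingleton.eq_univ_of_nonempty ((hCne.smul_set).add (hDne.smul_set))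
    have huniv : volume (Set.univ : Set (Fin 0 → ℝ)) = 1 := by
      rw [MeasureTheory.volume_pi, Measure.pi_univ]
      simp
    rw [hEu, hCu, hDu, huniv, ENNReal.one_rpow, ENNReal.one_rpow, one_mul]
  | succ n ih =>
    intro C D hC hD hCne hDne t ht0 ht1
    set e := MeasurableEquiv.piFinSuccAbove (fun _ : Fin (n + 1) => ℝ) 0 with he
    have mp : MeasurePreserving e := volume_preserving_piFinSuccAbove (fun _ => ℝ) 0
    have hadd : ∀ u v : Fin (n + 1) → ℝ, e (u + v) = e u + e v := fun u v => rfl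
    have hsmul : ∀ (a : ℝ) (u : Fin (n + 1) → ℝ), e (a • u) = a • e u := fun a u => rfl
    have hcont : Continuous e := by
      refine Continuous.prodMk (continuous_apply _) ?_
      exact continuous_pi fun j => continuous_apply _
    have himg : ∀ (S T : Set (Fin (n + 1) → ℝ)) (a b : ℝ),
        e '' (a • S + b • T) = a • (e '' S) + b • (e '' T) := by
      intro S T a b
      ext z
      constructor
      · rintro ⟨w, ⟨p, ⟨u, hu, rfl⟩, q, ⟨v, hv, rfl⟩, rfl⟩, rfl⟩
        refine ⟨a • e u, Set.smul_mem_smul_set ⟨u, hu, rfl⟩,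
          b • e v, Set.smul_mem_smul_set ⟨v, hv, rfl⟩, ?_⟩
        show a • e u + b • e v = e (a • u + b • v)
        rw [hadd, hsmul, hsmul]
      · rintro ⟨p, ⟨p', ⟨u, hu, rfl⟩, rfl⟩, q, ⟨q', ⟨v, hv, rfl⟩, rfl⟩, rfl⟩
        refine ⟨a • u + b • v, ⟨a • u, Set.smul_mem_smul_set hu,
          b • v, Set.smul_mem_smul_set hv, rfl⟩, ?_⟩
        show e (a • u + b • v) = a • e u + b • e v
        rw [hadd, hsmul, hsmul]
    have hvol : ∀ (S : Set (Fin (n + 1) → ℝ)), MeasurableSet S → volume (e '' S) = volume S := by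
      intro S hS
      rw [MeasurableEquiv.image_eq_preimage_symm]
      exact (mp.symm e).measure_preimage hS.nullMeasurableSet
    have hEc : IsCompact (t • C + (1 - t) • D) := (hC.smul t).add (hD.smul (1 - t))
    calc volume C ^ t * volume D ^ (1 - t)
        = volume (e '' C) ^ t * volume (e '' D) ^ (1 - t) := by
          rw [hvol C hC.measurableSet, hvol D hD.measurableSet]
      _ ≤ volume (t • (e '' C) + (1 - t) • (e '' D)) :=
          prodStep ih _ _ (hC.image hcont) (hD.image hcont) ht0 ht1
      _ = volume (e '' (t • C + (1 - t) • D)) := by rw [himg]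
      _ = volume (t • C + (1 - t) • D) := hvol _ hEc.measurableSet






theorem stmt10 (n : ℕ) (A B : Set (ℝ × (Fin n → ℝ))) (t : ℝ) (ht : t ∈ Set.Ioo (0:ℝ) 1)
    (hA : IsCompact A) (hB : IsCompact B)
    (s : ℝ) (hs0 : 0 ≤ s)
    (hs : ENNReal.ofReal s <
      min (⨆ x : ℝ, volume {y | (x, y) ∈ A}) (⨆ x : ℝ, volume {y | (x, y) ∈ B})) :
    ENNReal.ofReal t * volume {x : ℝ | ENNReal.ofReal s < volume {y | (x, y) ∈ A}}
      + ENNReal.ofReal (1 - t) * volume {x : ℝ | ENNReal.ofReal s < volume {y | (x, y) ∈ B}}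
    ≤ volume {x : ℝ | ENNReal.ofReal s < volume {y | (x, y) ∈ t • A + (1 - t) • B}} := by
  obtain ⟨ht0, ht1⟩ := ht
  have h1t : 0 < 1 - t := by linarith
  set E := t • A + (1 - t) • B with hE
  have hEc : IsCompact E := (hA.smul t).add (hB.smul (1 - t))
  set U := {x : ℝ | ENNReal.ofReal s < volume {y | (x, y) ∈ A}} with hU
  set V := {x : ℝ | ENNReal.ofReal s < volume {y | (x, y) ∈ B}} with hV
  have hsliceA : ∀ x : ℝ, {y | (x, y) ∈ A} = Prod.mk x ⁻¹' A := fun x => rfl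
  have hUm : MeasurableSet U :=
    measurableSet_lt measurable_const (measurable_measure_prodMk_left hA.measurableSet)
  have hVm : MeasurableSet V :=
    measurableSet_lt measurable_const (measurable_measure_prodMk_left hB.measurableSet)
  have hUne : U.Nonempty := by
    obtain ⟨x₀, hx₀⟩ := lt_iSup_iff.mp (lt_of_lt_of_le hs (min_le_left _ _))
    exact ⟨x₀, hx₀⟩
  have hVne : V.Nonempty := by
    obtain ⟨x₀, hx₀⟩ := lt_iSup_iff.mp (lt_of_lt_of_le hs (min_le_right _ _))
    exact ⟨x₀, hx₀⟩
  have hslice_ne : ∀ (S : Set (ℝ × (Fin n → ℝ))) (x : ℝ),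
      ENNReal.ofReal s < volume {y | (x, y) ∈ S} → (Prod.mk x ⁻¹' S).Nonempty := by
    intro S x hx
    by_contra hemp
    rw [Set.not_nonempty_iff_eq_empty] at hemp
    rw [show {y | (x, y) ∈ S} = Prod.mk x ⁻¹' S from rfl, hemp, measure_empty] at hx
    exact absurd hx (not_lt.2 zero_le)
  have hUsub : U ⊆ Prod.fst '' A := by
    intro x hx
    obtain ⟨y, hy⟩ := hslice_ne A x hx
    exact ⟨(x, y), hy, rfl⟩
  have hVsub : V ⊆ Prod.fst '' B := by
    intro x hx
    obtain ⟨y, hy⟩ := hslice_ne B x hx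
    exact ⟨(x, y), hy, rfl⟩
  have hUfin : volume U ≠ ⊤ :=
    ne_top_of_le_ne_top ((hA.image continuous_fst).measure_lt_top (μ := volume)).ne
      (measure_mono hUsub)
  have hVfin : volume V ≠ ⊤ :=
    ne_top_of_le_ne_top ((hB.image continuous_fst).measure_lt_top (μ := volume)).ne
      (measure_mono hVsub)
  have hincl : t • U + (1 - t) • V
      ⊆ {x : ℝ | ENNReal.ofReal s < volume {y | (x, y) ∈ E}} := by
    rintro z ⟨p, ⟨x, hx, rfl⟩, q, ⟨y, hy, rfl⟩, rfl⟩
    show ENNReal.ofReal s < volume {v | (t • x + (1 - t) • y, v) ∈ E}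
    have hAx := hslice_ne A x hx
    have hBy := hslice_ne B y hy
    have hmin : ENNReal.ofReal s
        < min (volume (Prod.mk x ⁻¹' A)) (volume (Prod.mk y ⁻¹' B)) := lt_min hx hy
    have step := (ennreal_min_le_gm (volume (Prod.mk x ⁻¹' A)) (volume (Prod.mk y ⁻¹' B))
      ht0 ht1).trans (mulBM n _ _ (slice_isCompact hA x) (slice_isCompact hB y)
      hAx hBy t ht0 ht1)
    refine lt_of_lt_of_le (lt_of_lt_of_le hmin step) (measure_mono ?_)
    rintro w ⟨p', ⟨u, hu, rfl⟩, q', ⟨v, hv, rfl⟩, rfl⟩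
    have hmem : t • ((x, u) : ℝ × (Fin n → ℝ)) + (1 - t) • (y, v) ∈ E :=
      Set.add_mem_add (Set.smul_mem_smul_set hu) (Set.smul_mem_smul_set hv)
    have heq : t • ((x, u) : ℝ × (Fin n → ℝ)) + (1 - t) • (y, v)
        = (t • x + (1 - t) • y, t • u + (1 - t) • v) := by
      simp [Prod.ext_iff, smul_eq_mul]
    rw [heq] at hmem
    exact hmem
  calc ENNReal.ofReal t * volume U + ENNReal.ofReal (1 - t) * volume V
      ≤ volume (t • U + (1 - t) • V) :=
        bm_scaled hUm hVm hUne hVne hUfin hVfin ⟨ht0, ht1⟩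
    _ ≤ volume {x : ℝ | ENNReal.ofReal s < volume {y | (x, y) ∈ E}} := measure_mono hincl
end

section
/- Let ℛ ⊆ ℝ² be a bounded set, t ∈ (0,1), and let (A_ν, B_ν) be sequences of Borel subsets of ℝ² with |A_ν| → 1, |B_ν| → 1, and |tA_ν + (1-t)B_ν| → 1. Suppose 𝒞_ν ⊆ ℛ are compact convex sets with |A_ν △ 𝒞_ν| → 0 and |B_ν △ 𝒞_ν| → 0. Then sup_{z ∈ A_ν} dist(z, 𝒞_ν) → 0 and sup_{z ∈ B_ν} dist(z, 𝒞_ν) → 0 as ν → ∞. -/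
open MeasureTheory Set Filter Metric
open scoped Pointwise ENNReal Topology RealInnerProductSpace

local notation "E2" => EuclideanSpace ℝ (Fin 2)

set_option maxHeartbeats 2000000 in
lemma key_lemma (t : ℝ) (ht : t ∈ Set.Ioo (0:ℝ) 1) (D : ℝ) (hD : 1 ≤ D)
    (A B C : Set E2) (hA : MeasurableSet A) (hB : MeasurableSet B)
    (hCc : IsCompact C) (hCv : Convex ℝ C) (hCD : C ⊆ Metric.closedBall 0 D)
    (hCne : C.Nonempty)
    (ε : ℝ) (hε : 0 < ε) (z : E2) (hzA : z ∈ A) (hzd : ε ≤ infDist z C) :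
    volume (A ∩ B ∩ C)
      + ENNReal.ofReal ((1-t)^2 * (min (t*ε/(2*(1-t))) (2*D) / (2*D))^2) * volume C
    ≤ volume (t • A + (1 - t) • B) + ENNReal.ofReal ((1-t)^2) * volume (C \ B) := by
  obtain ⟨ht0, ht1⟩ := ht
  have ht1' : 0 < 1 - t := by linarith
  set δ : ℝ := min (t*ε/(2*(1-t))) (2*D) with hδdef
  have hδpos : 0 < δ := lt_min (by positivity) (by linarith)
  have hδD : δ ≤ 2*D := min_le_right _ _
  have hδt : (1-t) * δ ≤ t * ε / 2 := by
    have : δ ≤ t*ε/(2*(1-t)) := min_le_left _ _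
    calc (1-t) * δ ≤ (1-t) * (t*ε/(2*(1-t))) := by nlinarith
    _ = t*ε/2 := by field_simp
  set θ : ℝ := δ / (2*D) with hθdef
  have hθpos : 0 < θ := by positivity
  have hθ1 : θ ≤ 1 := by rw [hθdef, div_le_one (by linarith)]; exact hδD
  -- projection
  obtain ⟨v, hvC, hvd⟩ := hCc.exists_infDist_eq_dist hCne z
  set u : E2 := z - v with hu
  set ρ : ℝ := ‖u‖ with hρ
  have hρd : ρ = infDist z C := by rw [hρ, hu, ← dist_eq_norm, hvd]
  have hρε : ε ≤ ρ := hρd ▸ hzd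
  have hρpos : 0 < ρ := lt_of_lt_of_le hε hρε
  have hproj : ∀ w ∈ C, ⟪u, w - v⟫ ≤ 0 := by
    rw [← norm_eq_iInf_iff_real_inner_le_zero hCv hvC]
    simp_rw [← dist_eq_norm]
    rw [← hvd, infDist_eq_iInf]
  have hinnC : ∀ w ∈ C, ⟪u, w⟫ ≤ ⟪u, v⟫ := by
    intro w hw
    have := hproj w hw
    rw [inner_sub_right] at this
    linarith
  have hinnz : ⟪u, z⟫ = ⟪u, v⟫ + ρ^2 := by
    have : ⟪u, z - v⟫ = ρ^2 := by
      rw [hρ, ← hu, real_inner_self_eq_norm_sq]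
    rw [inner_sub_right] at this
    linarith
  -- the slab
  set slab : Set E2 := C ∩ {w | ⟪u, v⟫ - δ*ρ ≤ ⟪u, w⟫} with hslab
  have hslabC : slab ⊆ C := inter_subset_left
  have hslabm : MeasurableSet slab := by
    apply (hCc.isClosed.measurableSet).inter
    have : Continuous fun w : E2 => ⟪u, w⟫ := continuous_const.inner continuous_id
    exact (isClosed_le continuous_const this).measurableSet
  -- homothety of C inside slab
  have hhom : ((1-θ) • v) +ᵥ (θ • C) ⊆ slab := by
    rintro x ⟨y, ⟨w, hwC, rfl⟩, rfl⟩
    constructor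
    · have := hCv hvC hwC (by linarith : (0:ℝ) ≤ 1-θ) hθpos.le (by ring)
      simpa [vadd_eq_add] using this
    · simp only [vadd_eq_add, mem_setOf_eq, inner_add_right, real_inner_smul_right]
      have hw2D : ‖w - v‖ ≤ 2*D := by
        have h1 := hCD hwC
        have h2 := hCD hvC
        simp only [mem_closedBall, dist_zero_right] at h1 h2
        calc ‖w - v‖ ≤ ‖w‖ + ‖v‖ := norm_sub_le _ _
        _ ≤ 2*D := by linarith
      have habs : |⟪u, w - v⟫| ≤ ρ * (2*D) := by
        calc |⟪u, w - v⟫| ≤ ‖u‖ * ‖w - v‖ := abs_real_inner_le_norm _ _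
        _ ≤ ρ * (2*D) := by rw [← hρ]; exact mul_le_mul_of_nonneg_left hw2D hρpos.le
      have h3 : ⟪u, w⟫ - ⟪u, v⟫ ≥ -(ρ * (2*D)) := by
        have := neg_abs_le (⟪u, w - v⟫)
        rw [inner_sub_right] at habs this
        linarith
      have hθρ : θ * (ρ * (2*D)) = δ * ρ := by
        rw [hθdef]; field_simp
      nlinarith [hθpos.le]
  -- the extra piece
  set extra : Set E2 := (t • z) +ᵥ ((1-t) • (B ∩ slab)) with hextra
  have hextram : MeasurableSet extra := by
    exact ((hB.inter hslabm).const_smul₀ (1-t)).const_vadd _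
  have hextraS : extra ⊆ t • A + (1 - t) • B := by
    rintro x ⟨y, ⟨w, hw, rfl⟩, rfl⟩
    exact Set.add_mem_add (smul_mem_smul_set hzA) (smul_mem_smul_set hw.1)
  have hextraC : ∀ x ∈ extra, x ∉ C := by
    rintro x ⟨y, ⟨w, hw, rfl⟩, rfl⟩ hxC
    have h1 : ⟪u, v⟫ - δ*ρ ≤ ⟪u, w⟫ := hw.2.2
    have h2 : ⟪u, (t • z) +ᵥ ((1-t) • w)⟫ ≤ ⟪u, v⟫ := hinnC _ hxC
    simp only [vadd_eq_add, inner_add_right, real_inner_smul_right] at h2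
    rw [hinnz] at h2
    have h3 : (1-t) * (⟪u, v⟫ - δ*ρ) ≤ (1-t) * ⟪u, w⟫ :=
      mul_le_mul_of_nonneg_left h1 ht1'.le
    have h4 : t*ρ^2 ≤ (1-t)*δ*ρ := by nlinarith [h2, h3]
    have h5 : (1-t)*δ*ρ ≤ (t*ε/2)*ρ := mul_le_mul_of_nonneg_right hδt hρpos.le
    have h7 : t*ε/2*ρ ≤ t*ρ/2*ρ := by
      nlinarith [mul_le_mul_of_nonneg_left hρε (by positivity : (0:ℝ) ≤ t/2*ρ)]
    linarith [h4, h5, h7, mul_pos ht0 (mul_pos hρpos hρpos)]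
  -- volume computations
  have hdim : Module.finrank ℝ E2 = 2 := finrank_euclideanSpace_fin
  have hvol_extra : volume extra = ENNReal.ofReal ((1-t)^2) * volume (B ∩ slab) := by
    rw [hextra, measure_vadd, Measure.addHaar_smul_of_nonneg volume ht1'.le, hdim]
  have hvol_hom : volume (((1-θ) • v) +ᵥ (θ • C)) = ENNReal.ofReal (θ^2) * volume C := by
    rw [measure_vadd, Measure.addHaar_smul_of_nonneg volume hθpos.le, hdim]
  -- slab ⊆ (B ∩ slab) ∪ (C \ B)
  have hslabsub : slab ⊆ (B ∩ slab) ∪ (C \ B) := by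
    intro w hw
    by_cases hwB : w ∈ B
    · exact Or.inl ⟨hwB, hw⟩
    · exact Or.inr ⟨hslabC hw, hwB⟩
  have hslab_lb : ENNReal.ofReal (θ^2) * volume C ≤ volume (B ∩ slab) + volume (C \ B) := by
    calc ENNReal.ofReal (θ^2) * volume C = volume (((1-θ) • v) +ᵥ (θ • C)) := hvol_hom.symm
    _ ≤ volume slab := measure_mono hhom
    _ ≤ volume ((B ∩ slab) ∪ (C \ B)) := measure_mono hslabsub
    _ ≤ volume (B ∩ slab) + volume (C \ B) := measure_union_le _ _
  -- disjoint union inside S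
  have hUm : MeasurableSet (A ∩ B ∩ C) := (hA.inter hB).inter hCc.isClosed.measurableSet
  have hUS : A ∩ B ∩ C ⊆ t • A + (1 - t) • B := by
    rintro w ⟨⟨hwA, hwB⟩, hwC⟩
    have : w = t • w + (1-t) • w := by
      rw [← add_smul]; simp
    rw [this]
    exact Set.add_mem_add (smul_mem_smul_set hwA) (smul_mem_smul_set hwB)
  have hdisj : Disjoint (A ∩ B ∩ C) extra := by
    rw [Set.disjoint_left]
    rintro x ⟨_, hxC⟩ hxe
    exact hextraC x hxe hxC
  have hS_lb : volume (A ∩ B ∩ C) + volume extra ≤ volume (t • A + (1 - t) • B) := by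
    rw [← measure_union hdisj hextram]
    exact measure_mono (union_subset hUS hextraS)
  -- assemble
  have hofReal : ENNReal.ofReal ((1-t)^2 * θ^2) = ENNReal.ofReal ((1-t)^2) * ENNReal.ofReal (θ^2) := by
    rw [← ENNReal.ofReal_mul (by positivity)]
  calc volume (A ∩ B ∩ C) + ENNReal.ofReal ((1-t)^2 * θ^2) * volume C
      = volume (A ∩ B ∩ C) + ENNReal.ofReal ((1-t)^2) * (ENNReal.ofReal (θ^2) * volume C) := by
        rw [hofReal, mul_assoc]
    _ ≤ volume (A ∩ B ∩ C) + ENNReal.ofReal ((1-t)^2) * (volume (B ∩ slab) + volume (C \ B)) := by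
        gcongr
    _ = (volume (A ∩ B ∩ C) + volume extra) + ENNReal.ofReal ((1-t)^2) * volume (C \ B) := by
        rw [hvol_extra]; ring
    _ ≤ volume (t • A + (1 - t) • B) + ENNReal.ofReal ((1-t)^2) * volume (C \ B) := by
        gcongr

lemma half_lemma (t : ℝ) (ht : t ∈ Set.Ioo (0:ℝ) 1)
    (R : Set E2) (hR : Bornology.IsBounded R)
    (Aν Bν Cν : ℕ → Set E2)
    (hAνm : ∀ ν, MeasurableSet (Aν ν)) (hBνm : ∀ ν, MeasurableSet (Bν ν))
    (hCν : ∀ ν, IsCompact (Cν ν) ∧ Convex ℝ (Cν ν) ∧ Cν ν ⊆ R)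
    (hA1 : Tendsto (fun ν => (volume (Aν ν)).toReal) atTop (𝓝 1))
    (hB1 : Tendsto (fun ν => (volume (Bν ν)).toReal) atTop (𝓝 1))
    (hS1 : Tendsto (fun ν => (volume (t • Aν ν + (1 - t) • Bν ν)).toReal) atTop (𝓝 1))
    (hAC : Tendsto (fun ν => (volume (symmDiff (Aν ν) (Cν ν))).toReal) atTop (𝓝 0))
    (hBC : Tendsto (fun ν => (volume (symmDiff (Bν ν) (Cν ν))).toReal) atTop (𝓝 0)) :
    ∀ ε > (0:ℝ), ∃ N, ∀ ν ≥ N, ∀ z ∈ Aν ν, infDist z (Cν ν) < ε := by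
  obtain ⟨ht0, ht1⟩ := ht
  have ht1' : 0 < 1 - t := by linarith
  obtain ⟨D, hD1, hRD⟩ := hR.subset_closedBall_lt 1 0
  intro ε hε
  by_contra hcon
  push_neg at hcon
  -- the constant
  set θ : ℝ := min (t*ε/(2*(1-t))) (2*D) / (2*D) with hθ
  have hθ0 : 0 < θ := by
    apply div_pos (lt_min (by positivity) (by linarith)) (by linarith)
  have hθ1 : θ ≤ 1 := by
    rw [hθ, div_le_one (by linarith)]; exact min_le_right _ _
  set c : ℝ := (1-t)^2 * θ^2 with hc
  have hc0 : 0 < c := by positivity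
  have hc1 : c ≤ 1 := by
    have h1 : (1-t)^2 ≤ 1 := by nlinarith
    have h2 : θ^2 ≤ 1 := by nlinarith
    nlinarith [sq_nonneg θ]
  -- finiteness facts
  have hCm : ∀ ν, MeasurableSet (Cν ν) := fun ν => (hCν ν).1.isClosed.measurableSet
  have hCfin : ∀ ν, volume (Cν ν) ≠ ⊤ := by
    intro ν
    exact ne_top_of_le_ne_top (measure_closedBall_lt_top (x := (0:E2)) (r := D)).ne
      (measure_mono ((hCν ν).2.2.trans hRD))
  have hevAfin : ∀ᶠ ν in atTop, volume (Aν ν) ≠ ⊤ := by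
    filter_upwards [hA1.eventually_const_lt (by norm_num : (1:ℝ)/2 < 1)] with ν hν hT
    rw [hT] at hν; simp at hν; linarith
  have hevSfin : ∀ᶠ ν in atTop, volume (t • Aν ν + (1 - t) • Bν ν) ≠ ⊤ := by
    filter_upwards [hS1.eventually_const_lt (by norm_num : (1:ℝ)/2 < 1)] with ν hν hT
    rw [hT] at hν; simp at hν; linarith
  have hsdAfin : ∀ᶠ ν in atTop, volume (symmDiff (Aν ν) (Cν ν)) ≠ ⊤ := by
    filter_upwards [hevAfin] with ν hν
    have hu : volume (Aν ν ∪ Cν ν) ≠ ⊤ :=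
      ne_top_of_le_ne_top (ENNReal.add_ne_top.mpr ⟨hν, hCfin ν⟩) (measure_union_le _ _)
    exact ne_top_of_le_ne_top hu (measure_mono symmDiff_subset_union)
  have hevBfin : ∀ᶠ ν in atTop, volume (Bν ν) ≠ ⊤ := by
    filter_upwards [hB1.eventually_const_lt (by norm_num : (1:ℝ)/2 < 1)] with ν hν hT
    rw [hT] at hν; simp at hν; linarith
  have hsdBfin : ∀ᶠ ν in atTop, volume (symmDiff (Bν ν) (Cν ν)) ≠ ⊤ := by
    filter_upwards [hevBfin] with ν hν
    have hu : volume (Bν ν ∪ Cν ν) ≠ ⊤ :=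
      ne_top_of_le_ne_top (ENNReal.add_ne_top.mpr ⟨hν, hCfin ν⟩) (measure_union_le _ _)
    exact ne_top_of_le_ne_top hu (measure_mono symmDiff_subset_union)
  have hc16 : (0:ℝ) < c/16 := by linarith
  have e1 : ∀ᶠ ν in atTop, (volume (Cν ν \ Aν ν)).toReal < c/16 := by
    filter_upwards [hsdAfin, hAC.eventually_lt_const hc16] with ν h1 h2
    refine lt_of_le_of_lt (ENNReal.toReal_mono h1 (measure_mono ?_)) h2
    intro x hx; rw [Set.mem_symmDiff]; exact Or.inr ⟨hx.1, hx.2⟩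
  have e2 : ∀ᶠ ν in atTop, (volume (Cν ν \ Bν ν)).toReal < c/16 := by
    filter_upwards [hsdBfin, hBC.eventually_lt_const hc16] with ν h1 h2
    refine lt_of_le_of_lt (ENNReal.toReal_mono h1 (measure_mono ?_)) h2
    intro x hx; rw [Set.mem_symmDiff]; exact Or.inr ⟨hx.1, hx.2⟩
  have e3 : ∀ᶠ ν in atTop, (volume (t • Aν ν + (1 - t) • Bν ν)).toReal < 1 + c/4 :=
    hS1.eventually_lt_const (by linarith)
  have e4 : ∀ᶠ ν in atTop, 1 - c/8 < (volume (Cν ν)).toReal := by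
    filter_upwards [hA1.eventually_const_lt (by linarith : 1 - c/16 < 1),
      hAC.eventually_lt_const hc16, hsdAfin] with ν h1 h2 h3
    have hsub : Aν ν ⊆ Cν ν ∪ symmDiff (Aν ν) (Cν ν) := by
      intro x hx
      by_cases hxC : x ∈ Cν ν
      · exact Or.inl hxC
      · exact Or.inr (Set.mem_symmDiff.mpr (Or.inl ⟨hx, hxC⟩))
    have hle : volume (Aν ν) ≤ volume (Cν ν) + volume (symmDiff (Aν ν) (Cν ν)) :=
      le_trans (measure_mono hsub) (measure_union_le _ _)
    have := ENNReal.toReal_mono (ENNReal.add_ne_top.mpr ⟨hCfin ν, h3⟩) hle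
    rw [ENNReal.toReal_add (hCfin ν) h3] at this
    linarith
  -- pick a bad index
  obtain ⟨N, hN⟩ := (((e1.and e2).and (e3.and e4)).and hevSfin).exists_forall_of_atTop
  obtain ⟨ν, hνN, z, hzA, hzd⟩ := hcon N
  obtain ⟨⟨⟨e1ν, e2ν⟩, ⟨e3ν, e4ν⟩⟩, hSfin⟩ := hN ν hνN
  obtain ⟨hCc, hCv, hCR⟩ := hCν ν
  have hCD : Cν ν ⊆ closedBall 0 D := hCR.trans hRD
  have hCne : (Cν ν).Nonempty := by
    rcases Set.eq_empty_or_nonempty (Cν ν) with h | h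
    · exfalso; rw [h] at e4ν; simp at e4ν; linarith
    · exact h
  have hkey := key_lemma t ⟨ht0, ht1⟩ D hD1.le _ _ _ (hAνm ν) (hBνm ν) hCc hCv hCD hCne
    ε hε z hzA hzd
  have hc_eq : (1-t)^2 * (min (t*ε/(2*(1-t))) (2*D) / (2*D))^2 = c := rfl
  rw [hc_eq] at hkey
  have hUfin : volume (Aν ν ∩ Bν ν ∩ Cν ν) ≠ ⊤ :=
    ne_top_of_le_ne_top (hCfin ν) (measure_mono inter_subset_right)
  have hCAfin : volume (Cν ν \ Aν ν) ≠ ⊤ :=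
    ne_top_of_le_ne_top (hCfin ν) (measure_mono diff_subset)
  have hCBfin : volume (Cν ν \ Bν ν) ≠ ⊤ :=
    ne_top_of_le_ne_top (hCfin ν) (measure_mono diff_subset)
  have hRfin : volume (t • Aν ν + (1 - t) • Bν ν)
      + ENNReal.ofReal ((1-t)^2) * volume (Cν ν \ Bν ν) ≠ ⊤ :=
    ENNReal.add_ne_top.mpr ⟨hSfin, ENNReal.mul_ne_top ENNReal.ofReal_ne_top hCBfin⟩
  have hreal := ENNReal.toReal_mono hRfin hkey
  rw [ENNReal.toReal_add hUfin (ENNReal.mul_ne_top ENNReal.ofReal_ne_top (hCfin ν)),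
    ENNReal.toReal_add hSfin (ENNReal.mul_ne_top ENNReal.ofReal_ne_top hCBfin),
    ENNReal.toReal_mul, ENNReal.toReal_mul, ENNReal.toReal_ofReal hc0.le,
    ENNReal.toReal_ofReal (by positivity : (0:ℝ) ≤ (1-t)^2)] at hreal
  -- lower bound for the toReal of the intersection
  have hCsub : Cν ν ⊆ (Aν ν ∩ Bν ν ∩ Cν ν) ∪ (Cν ν \ Aν ν) ∪ (Cν ν \ Bν ν) := by
    intro x hx
    by_cases hxA : x ∈ Aν ν
    · by_cases hxB : x ∈ Bν ν
      · exact Or.inl (Or.inl ⟨⟨hxA, hxB⟩, hx⟩)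
      · exact Or.inr ⟨hx, hxB⟩
    · exact Or.inl (Or.inr ⟨hx, hxA⟩)
  have h5 : volume (Cν ν) ≤ volume (Aν ν ∩ Bν ν ∩ Cν ν) + volume (Cν ν \ Aν ν)
      + volume (Cν ν \ Bν ν) :=
    le_trans (measure_mono hCsub)
      (le_trans (measure_union_le _ _) (add_le_add_left (measure_union_le _ _) _))
  have h6 := ENNReal.toReal_mono
    (by exact ENNReal.add_ne_top.mpr ⟨ENNReal.add_ne_top.mpr ⟨hUfin, hCAfin⟩, hCBfin⟩) h5
  rw [ENNReal.toReal_add (ENNReal.add_ne_top.mpr ⟨hUfin, hCAfin⟩) hCBfin,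
    ENNReal.toReal_add hUfin hCAfin] at h6
  have h7 : (1-t)^2 ≤ 1 := by nlinarith
  have h8 : (0:ℝ) ≤ (volume (Cν ν \ Bν ν)).toReal := ENNReal.toReal_nonneg
  nlinarith [mul_le_mul_of_nonneg_left e4ν.le hc0.le,
    mul_le_mul_of_nonneg_right h7 h8, hc0, hc1, hreal, h6, e1ν, e2ν, e3ν]

theorem stmt18 (t : ℝ) (ht : t ∈ Set.Ioo (0:ℝ) 1)
    (R : Set (EuclideanSpace ℝ (Fin 2))) (hR : Bornology.IsBounded R)
    (Aν Bν Cν : ℕ → Set (EuclideanSpace ℝ (Fin 2)))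
    (hAνm : ∀ ν, MeasurableSet (Aν ν)) (hBνm : ∀ ν, MeasurableSet (Bν ν))
    (hCν : ∀ ν, IsCompact (Cν ν) ∧ Convex ℝ (Cν ν) ∧ Cν ν ⊆ R)
    (hA1 : Tendsto (fun ν => (volume (Aν ν)).toReal) atTop (𝓝 1))
    (hB1 : Tendsto (fun ν => (volume (Bν ν)).toReal) atTop (𝓝 1))
    (hS1 : Tendsto (fun ν => (volume (t • Aν ν + (1 - t) • Bν ν)).toReal) atTop (𝓝 1))
    (hAC : Tendsto (fun ν => (volume (symmDiff (Aν ν) (Cν ν))).toReal) atTop (𝓝 0))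
    (hBC : Tendsto (fun ν => (volume (symmDiff (Bν ν) (Cν ν))).toReal) atTop (𝓝 0)) :
    (∀ ε > (0:ℝ), ∃ N, ∀ ν ≥ N, ∀ z ∈ Aν ν, infDist z (Cν ν) < ε) ∧
    (∀ ε > (0:ℝ), ∃ N, ∀ ν ≥ N, ∀ z ∈ Bν ν, infDist z (Cν ν) < ε) := by
  obtain ⟨ht0, ht1⟩ := ht
  have ht' : (1 - t) ∈ Set.Ioo (0:ℝ) 1 := ⟨by linarith, by linarith⟩
  have hS1' : Tendsto (fun ν => (volume ((1-t) • Bν ν + (1 - (1-t)) • Aν ν)).toReal)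
      atTop (𝓝 1) := by
    have heq : ∀ ν, (1-t) • Bν ν + (1 - (1-t)) • Aν ν = t • Aν ν + (1 - t) • Bν ν := by
      intro ν; rw [sub_sub_cancel, add_comm]
    simpa only [heq] using hS1
  exact ⟨half_lemma t ⟨ht0, ht1⟩ R hR Aν Bν Cν hAνm hBνm hCν hA1 hB1 hS1 hAC hBC,
    half_lemma (1-t) ht' R hR Bν Aν Cν hBνm hAνm hCν hB1 hA1 hS1' hBC hAC⟩
end
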